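/- The pair of statistics (das, mix) is equidistributed with (des, inv) on S_n: for all natural numbers a and b, the number of permutations π ∈ S_n with das π = a and mix π = b equals the number of permutations π ∈ S_n with des π = a and inv π = b. -/

import Mathlib

namespace PaperStats

/-- `des w` is the number of descents of the word `w` (0-indexed positions `i`
with `w(i) > w(i+1)`). -/
def des (w : List ℕ) : ℕ :=
  ((Finset.range (w.length - 1)).filter fun i => w.getD (i + 1) 0 < w.getD i 0).card

/-- `inv w` is the number of inversions of the word `w`: pairs of positions
`i < j` with `w(i) > w(j)`. -/
def inv (w : List ℕ) : ℕ :=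
  ((Finset.range w.length ×ˢ Finset.range w.length).filter
    fun p => p.1 < p.2 ∧ w.getD p.2 0 < w.getD p.1 0).card

/-- An inversion `(i,j)` of `w` is admissible if either `w(j) < w(j+1)`
(`j` is not the last position and is followed by an ascent), or there is a
position `k` strictly between `i` and `j` with `w(j) > w(k)`. -/
def IsAdmissible (w : List ℕ) (i j : ℕ) : Prop :=
  (j + 1 < w.length ∧ w.getD j 0 < w.getD (j + 1) 0) ∨
    ∃ k, i < k ∧ k < j ∧ w.getD k 0 < w.getD j 0

instance (w : List ℕ) (i j : ℕ) : Decidable (IsAdmissible w i j) :=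
  decidable_of_iff ((j + 1 < w.length ∧ w.getD j 0 < w.getD (j + 1) 0) ∨
      ∃ k ∈ Finset.Ioo i j, w.getD k 0 < w.getD j 0) (by
    unfold IsAdmissible
    simp only [Finset.mem_Ioo, and_assoc])

/-- `ai w` is the number of admissible inversions of `w`. -/
def ai (w : List ℕ) : ℕ :=
  ((Finset.range w.length ×ˢ Finset.range w.length).filter
    fun p => p.1 < p.2 ∧ w.getD p.2 0 < w.getD p.1 0 ∧ IsAdmissible w p.1 p.2).card

/-- `aid w = ai w + des w`. -/
def aid (w : List ℕ) : ℕ := ai w + des w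

/-- The statistic `aix`, defined recursively: `aix ∅ = 0`; writing a nonempty
word as `π = α m β`, where `m` is the smallest letter and `α` is the maximal
prefix not containing `m`, one has `aix π = 1 + aix β` if `α = ∅`,
`aix π = 0` if `β = ∅` (and `α ≠ ∅`), and `aix π = aix α` otherwise. -/
def aix : List ℕ → ℕ
  | [] => 0
  | x :: xs =>
    if (x :: xs).takeWhile (fun a => decide (a ≠ xs.foldr min x)) = [] then
      1 + aix (((x :: xs).dropWhile (fun a => decide (a ≠ xs.foldr min x))).tail)
    else if ((x :: xs).dropWhile (fun a => decide (a ≠ xs.foldr min x))).tail = [] then 0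
    else aix ((x :: xs).takeWhile (fun a => decide (a ≠ xs.foldr min x)))
termination_by w => w.length
decreasing_by
  all_goals simp only [List.foldr_attach] at *
  · have h1 := (List.dropWhile_sublist (l := x :: xs) (fun a => decide (a ≠ xs.foldr min x))).length_le
    have h2 := List.length_tail (l := (x :: xs).dropWhile (fun a => decide (a ≠ xs.foldr min x)))
    simp only [List.length_cons] at *
    omega
  · rename_i hα hβ
    have h0 : ((x :: xs).takeWhile (fun a => decide (a ≠ xs.foldr min x))) ++
        ((x :: xs).dropWhile (fun a => decide (a ≠ xs.foldr min x))) = x :: xs :=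
      List.takeWhile_append_dropWhile ..
    have h1 : ((x :: xs).dropWhile (fun a => decide (a ≠ xs.foldr min x))) ≠ [] := by
      intro h
      apply hβ
      rw [h]
      rfl
    have h2 := congrArg List.length h0
    simp only [List.length_append, List.length_cons] at h2
    have h3 : 0 < ((x :: xs).dropWhile (fun a => decide (a ≠ xs.foldr min x))).length :=
      List.length_pos_iff.mpr h1
    simp only [List.length_cons]
    omega

/-- The map `f(k,τ)`: with `m` the smallest letter of `τ` together with `k`
(`k` not occurring in `τ`), and `τ = α m β` with `α` the maximal prefix of `τ`
avoiding `m`: `f(k,∅) = k`; `f(k,τ) = kτ` if `k = m`; and for `k > m`,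
`f(k,τ) = f(k,β) m` if `α = ∅`, `f(k,τ) = k m α` if `β = ∅`, and
`f(k,τ) = f(k,α) m β` otherwise. -/
def fkt (k : ℕ) : List ℕ → List ℕ
  | [] => [k]
  | x :: xs =>
    if k < xs.foldr min x then k :: x :: xs
    else if (x :: xs).takeWhile (fun a => decide (a ≠ xs.foldr min x)) = [] then
      fkt k (((x :: xs).dropWhile (fun a => decide (a ≠ xs.foldr min x))).tail) ++
        [xs.foldr min x]
    else if ((x :: xs).dropWhile (fun a => decide (a ≠ xs.foldr min x))).tail = [] then
      k :: xs.foldr min x :: ((x :: xs).takeWhile (fun a => decide (a ≠ xs.foldr min x)))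
    else
      fkt k ((x :: xs).takeWhile (fun a => decide (a ≠ xs.foldr min x))) ++
        xs.foldr min x :: ((x :: xs).dropWhile (fun a => decide (a ≠ xs.foldr min x))).tail
termination_by w => w.length
decreasing_by
  all_goals simp only [List.foldr_attach] at *
  · have h1 := (List.dropWhile_sublist (l := x :: xs) (fun a => decide (a ≠ xs.foldr min x))).length_le
    have h2 := List.length_tail (l := (x :: xs).dropWhile (fun a => decide (a ≠ xs.foldr min x)))
    simp only [List.length_cons] at *
    omega
  · rename_i hk hα hβ
    have h0 : ((x :: xs).takeWhile (fun a => decide (a ≠ xs.foldr min x))) ++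
        ((x :: xs).dropWhile (fun a => decide (a ≠ xs.foldr min x))) = x :: xs :=
      List.takeWhile_append_dropWhile ..
    have h1 : ((x :: xs).dropWhile (fun a => decide (a ≠ xs.foldr min x))) ≠ [] := by
      intro h
      apply hβ
      rw [h]
      rfl
    have h2 := congrArg List.length h0
    simp only [List.length_append, List.length_cons] at h2
    have h3 : 0 < ((x :: xs).dropWhile (fun a => decide (a ≠ xs.foldr min x))).length :=
      List.length_pos_iff.mpr h1
    simp only [List.length_cons]
    omega

/-- `ini w` is the first letter of `w`. -/
def ini (w : List ℕ) : ℕ := w.headD 0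

/-- The word of a permutation `π ∈ S_n`, namely `π(1) π(2) … π(n)`
(with values in `{1, …, n}`). -/
def permList {n : ℕ} (π : Equiv.Perm (Fin n)) : List ℕ :=
  List.ofFn fun i => (π i : ℕ) + 1

/-- The bijection `φ`: `φ(π) = f(π(1), f(π(2), ⋯ f(π(n), ∅) ⋯ ))`. -/
def phiW (w : List ℕ) : List ℕ := w.foldr fkt []

/-- Helper: `decRun l` splits `l` into its maximal weakly decreasing prefix
and the rest. -/
def decRun : List ℕ → List ℕ × List ℕ
  | [] => ([], [])
  | [x] => ([x], [])
  | x :: y :: rest =>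
    if y ≤ x then ((x :: (decRun (y :: rest)).1), (decRun (y :: rest)).2)
    else ([x], y :: rest)

theorem decRun_append : ∀ l : List ℕ, (decRun l).1 ++ (decRun l).2 = l
  | [] => rfl
  | [x] => rfl
  | x :: y :: rest => by
    rw [decRun]
    split
    · simpa using decRun_append (y :: rest)
    · rfl

/-- Helper computing the hook factorization of a word from its reversal: the
rightmost hook of the word starts at its rightmost descent top, i.e. it is
obtained by extending the maximal weakly decreasing prefix of the reversed word
by one more letter; the process is repeated on what remains, and when no
letters usable for a hook remain the word left over is the increasing part
`π₀`. The result is `(π₀, [π₁, …, π_k])`. -/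
def hookRev (r : List ℕ) : List ℕ × List (List ℕ) :=
  match h : (decRun r).2 with
  | [] => (r.reverse, [])
  | z :: rest =>
    ((hookRev rest).1, (hookRev rest).2 ++ [z :: (decRun r).1.reverse])
termination_by r.length
decreasing_by
  have h2 := congrArg List.length (decRun_append r)
  rw [h] at h2
  simp only [List.length_append, List.length_cons] at h2
  omega

/-- The hook factorization `(π₀, [π₁, …, π_k])` of a word
`w = π₀ π₁ ⋯ π_k`, where `π₀` is increasing and each `π_i`, `i ≥ 1`, is a
hook. -/
def hookSplit (w : List ℕ) : List ℕ × List (List ℕ) := hookRev w.reverse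

/-- `pix w` is the length of the initial increasing factor `π₀` in the hook
factorization of `w`. -/
def pix (w : List ℕ) : ℕ := (hookSplit w).1.length

/-- `lec w` is the sum of the numbers of inversions of the hooks in the hook
factorization of `w`. -/
def lec (w : List ℕ) : ℕ := ((hookSplit w).2.map inv).sum

/-- A word `w(1) … w(r)` with `r ≥ 2` is a hook if
`w(1) > w(2) ≤ w(3) ≤ ⋯ ≤ w(r)`. -/
def IsHook (w : List ℕ) : Prop :=
  ∃ a b rest, w = a :: b :: rest ∧ b < a ∧ List.Chain' (· ≤ ·) (b :: rest)

/-- `w(i)` is a left-to-right maximum of `w` if `w(k) < w(i)` for all `k < i`. -/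
def IsLRMax (w : List ℕ) (i : ℕ) : Prop := ∀ k < i, w.getD k 0 < w.getD i 0

instance (w : List ℕ) (i : ℕ) : Decidable (IsLRMax w i) := by
  unfold IsLRMax; infer_instance

/-- `mix w` counts the pairs of positions `i < j` such that either
`w(i) > w(j)` and `w(i)` is a left-to-right maximum, or `w(i) < w(j)` and
there is `k < i` with `w(k) > w(j)`. -/
def mix (w : List ℕ) : ℕ :=
  ((Finset.range w.length ×ˢ Finset.range w.length).filter fun p =>
    p.1 < p.2 ∧ ((w.getD p.2 0 < w.getD p.1 0 ∧ IsLRMax w p.1) ∨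
      (w.getD p.1 0 < w.getD p.2 0 ∧ ∃ k ∈ Finset.range p.1, w.getD p.2 0 < w.getD k 0))).card

/-- `das w` counts the positions `i` such that either `w(i) > w(i+1)` and
`w(i)` is a left-to-right maximum, or `w(i) < w(i+1)` and there is `k < i`
with `w(k) > w(i+1)`. -/
def das (w : List ℕ) : ℕ :=
  ((Finset.range (w.length - 1)).filter fun i =>
    (w.getD (i + 1) 0 < w.getD i 0 ∧ IsLRMax w i) ∨
      (w.getD i 0 < w.getD (i + 1) 0 ∧ ∃ k ∈ Finset.range i, w.getD (i + 1) 0 < w.getD k 0)).card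

/-- The values of the left-to-right maxima of a word, listed in increasing
order (which is also their order of occurrence). -/
def lrMaxima : List ℕ → List ℕ
  | [] => []
  | x :: xs => x :: lrMaxima (xs.filter fun a => decide (x < a))
termination_by l => l.length
decreasing_by
  have := xs.length_filter_le (fun a => decide (x < a))
  simp only [List.length_cons, List.length_unattach] at *
  exact Nat.lt_succ_of_le ((List.length_filter_le _ _).trans_eq List.length_attach)

/-- `Bset w m` is the list of entries of `w` that are smaller than `m` and lie
to the right of (the first occurrence of) `m` in `w`. -/
def Bset (w : List ℕ) (m : ℕ) : List ℕ :=
  ((w.dropWhile fun a => decide (a ≠ m)).tail).filter fun a => decide (a < m)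

/-- Helper for `psiS`: replace the letters satisfying `P`, in order, by the
letters of the first list. -/
def replaceSub (P : ℕ → Bool) : List ℕ → List ℕ → List ℕ
  | _, [] => []
  | rs, x :: xs =>
    if P x then rs.headD x :: replaceSub P rs.tail xs else x :: replaceSub P rs xs

/-- `psiS S w` is `ψ_S(w)`: the result of reversing, in place, the subword of
`w` consisting of the entries belonging to `S`. -/
def psiS (S : List ℕ) (w : List ℕ) : List ℕ :=
  replaceSub (fun a => decide (a ∈ S)) ((w.filter fun a => decide (a ∈ S)).reverse) w

/-- Helper applying the alternating composition
`ψ_{B₁} ∘ ψ_{B₂ ∩ B₁} ∘ ψ_{B₂} ∘ ⋯ ∘ ψ_{B_{k-1}} ∘ ψ_{B_k ∩ B_{k-1}} ∘ ψ_{B_k}`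
to `w`, given the list `[B_k, B_{k-1}, …, B₁]`. -/
def psiChain : List (List ℕ) → List ℕ → List ℕ
  | [], w => w
  | [B], w => psiS B w
  | B :: B' :: rest, w => psiChain (B' :: rest) (psiS (B.inter B') (psiS B w))

/-- The Brändén–Claesson bijection `ψ`. -/
def psi (w : List ℕ) : List ℕ :=
  psiChain (((lrMaxima w).map (Bset w)).reverse) w

def codeI : List ℕ → List ℕ
  | [] => []
  | x :: xs => xs.countP (fun y => decide (y < x)) :: codeI xs

def gcode : ℕ → List ℕ → List ℕ
  | _, [] => []
  | m, x :: xs =>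
    (if m < x then xs.countP (fun y => decide (y < x))
     else xs.countP (fun y => decide (x < y ∧ y < m))) :: gcode (max m x) xs

lemma countP_eq_sum (w : List ℕ) (p : ℕ → Bool) :
    ∑ j ∈ Finset.range w.length, (if p (w.getD j 0) then 1 else 0) = w.countP p := by
  induction w with
  | nil => simp
  | cons x xs ih =>
    rw [List.length_cons, Finset.sum_range_succ']
    simp only [List.getD_cons_succ, List.getD_cons_zero, List.countP_cons, ih]

lemma countP_drop_eq_sum (w : List ℕ) (p : ℕ → Bool) (i : ℕ) :
    ∑ j ∈ Finset.range w.length, (if i < j ∧ p (w.getD j 0) then 1 else 0)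
      = (w.drop (i + 1)).countP p := by
  induction w generalizing i with
  | nil => simp
  | cons x xs ih =>
    rw [List.length_cons, Finset.sum_range_succ']
    simp only [List.getD_cons_succ, List.getD_cons_zero, Nat.not_lt_zero, false_and, if_false,
      add_zero]
    cases i with
    | zero =>
      simp only [Nat.zero_lt_succ, true_and, List.drop_succ_cons, List.drop_zero]
      exact countP_eq_sum xs p
    | succ i' =>
      simp only [Nat.succ_lt_succ_iff, List.drop_succ_cons]
      exact ih i'

lemma countP_drop_eq_sum' (w : List ℕ) (i : ℕ) (q : ℕ → Prop) [DecidablePred q] :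
    ∑ j ∈ Finset.range w.length, (if i < j ∧ q (w.getD j 0) then 1 else 0)
      = (w.drop (i + 1)).countP (fun y => decide (q y)) := by
  rw [← countP_drop_eq_sum w (fun y => decide (q y)) i]
  simp

-- inv as a sum of countP's
lemma inv_eq_sum (w : List ℕ) :
    inv w = ∑ i ∈ Finset.range w.length,
      (w.drop (i + 1)).countP (fun y => decide (y < w.getD i 0)) := by
  rw [inv, Finset.card_filter, Finset.sum_product]
  refine Finset.sum_congr rfl fun i _ => ?_
  simpa using countP_drop_eq_sum' w i (fun z => z < w.getD i 0)

lemma codeI_sum (w : List ℕ) :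
    (codeI w).sum = ∑ i ∈ Finset.range w.length,
      (w.drop (i + 1)).countP (fun y => decide (y < w.getD i 0)) := by
  induction w with
  | nil => simp [codeI]
  | cons x xs ih =>
    rw [List.length_cons, Finset.sum_range_succ']
    simp only [List.getD_cons_succ, List.getD_cons_zero, List.drop_succ_cons, List.drop_zero]
    rw [codeI, List.sum_cons, ih, add_comm]

lemma inv_eq (w : List ℕ) : inv w = (codeI w).sum := by
  rw [inv_eq_sum, codeI_sum]

lemma gcode_sum (m : ℕ) (w : List ℕ) :
    (gcode m w).sum = ∑ i ∈ Finset.range w.length,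
      (if (w.take i).foldl max m < w.getD i 0 then
        (w.drop (i + 1)).countP (fun y => decide (y < w.getD i 0))
      else
        (w.drop (i + 1)).countP (fun y => decide (w.getD i 0 < y ∧ y < (w.take i).foldl max m))) := by
  induction w generalizing m with
  | nil => simp [gcode]
  | cons x xs ih =>
    rw [List.length_cons, Finset.sum_range_succ']
    simp only [List.getD_cons_succ, List.getD_cons_zero, List.drop_succ_cons, List.drop_zero,
      List.take_succ_cons, List.take_zero, List.foldl_cons, List.foldl_nil]
    rw [gcode, List.sum_cons, ih (max m x), add_comm]

lemma codeI_getD (w : List ℕ) (i : ℕ) (h : i < w.length) :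
    (codeI w).getD i 0 = (w.drop (i + 1)).countP (fun y => decide (y < w.getD i 0)) := by
  induction w generalizing i with
  | nil => simp at h
  | cons x xs ih =>
    cases i with
    | zero => simp [codeI]
    | succ i' =>
      simp only [codeI, List.getD_cons_succ, List.drop_succ_cons]
      exact ih i' (by simpa using h)

lemma des_eq (w : List ℕ) : des w = des (codeI w) := by
  unfold des
  have hl : (codeI w).length = w.length := by
    induction w with
    | nil => rfl
    | cons x xs ih => simp [codeI, ih]
  rw [hl]
  congr 1
  refine Finset.filter_congr fun i hi => ?_
  rw [Finset.mem_range] at hi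
  have h1 : i + 1 < w.length := by omega
  have h0 : i < w.length := by omega
  set a := w.getD i 0 with ha
  set b := w.getD (i + 1) 0 with hb
  have hdrop : w.drop (i + 1) = b :: w.drop (i + 2) := by
    rw [List.drop_eq_getElem_cons h1, hb, List.getD_eq_getElem _ _ h1]
  rw [codeI_getD w i h0, codeI_getD w (i + 1) h1, hdrop, List.countP_cons]
  set S := w.drop (i + 2)
  constructor
  · intro hba
    have : S.countP (fun y => decide (y < b)) ≤ S.countP (fun y => decide (y < a)) :=
      List.countP_mono_left fun x _ hx => by
        simp only [decide_eq_true_eq] at *; omega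
    simp only [← ha, ← hb, decide_eq_true_eq, hba, if_true]
    omega
  · intro hlt
    by_contra hba
    have : S.countP (fun y => decide (y < a)) ≤ S.countP (fun y => decide (y < b)) :=
      List.countP_mono_left fun x _ hx => by
        simp only [decide_eq_true_eq] at *; omega
    simp only [← ha, ← hb, decide_eq_true_eq, hba, if_false] at hlt
    omega

-- getD characterizations

lemma gcode_getD (m : ℕ) (w : List ℕ) (i : ℕ) (h : i < w.length) :
    (gcode m w).getD i 0 =
      if (w.take i).foldl max m < w.getD i 0 then
        (w.drop (i + 1)).countP (fun y => decide (y < w.getD i 0))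
      else
        (w.drop (i + 1)).countP (fun y => decide (w.getD i 0 < y ∧ y < (w.take i).foldl max m)) := by
  induction w generalizing i m with
  | nil => simp at h
  | cons x xs ih =>
    cases i with
    | zero => simp [gcode]
    | succ i' =>
      simp only [gcode, List.getD_cons_succ, List.drop_succ_cons, List.take_succ_cons,
        List.foldl_cons]
      exact ih (max m x) i' (by simpa using h)

-- foldl max lemmas
lemma foldl_max_lt (l : List ℕ) (m c : ℕ) :
    l.foldl max m < c ↔ m < c ∧ ∀ x ∈ l, x < c := by
  induction l generalizing m with
  | nil => simp
  | cons x xs ih =>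
    simp only [List.foldl_cons, ih, max_lt_iff, List.mem_cons]
    constructor
    · rintro ⟨⟨h1, h2⟩, h3⟩; exact ⟨h1, fun y hy => by rcases hy with rfl | hy; exacts [h2, h3 y hy]⟩
    · rintro ⟨h1, h2⟩; exact ⟨⟨h1, h2 x (Or.inl rfl)⟩, fun y hy => h2 y (Or.inr hy)⟩

lemma lt_foldl_max (l : List ℕ) (m b : ℕ) :
    b < l.foldl max m ↔ b < m ∨ ∃ x ∈ l, b < x := by
  induction l generalizing m with
  | nil => simp
  | cons x xs ih =>
    simp only [List.foldl_cons, ih, lt_max_iff, List.mem_cons]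
    constructor
    · rintro ((h | h) | ⟨y, hy, h⟩)
      · exact Or.inl h
      · exact Or.inr ⟨x, Or.inl rfl, h⟩
      · exact Or.inr ⟨y, Or.inr hy, h⟩
    · rintro (h | ⟨y, (rfl | hy), h⟩)
      · exact Or.inl (Or.inl h)
      · exact Or.inl (Or.inr h)
      · exact Or.inr ⟨y, hy, h⟩

lemma foldl_max_mem (l : List ℕ) (m : ℕ) : l.foldl max m = m ∨ l.foldl max m ∈ l := by
  induction l generalizing m with
  | nil => exact Or.inl rfl
  | cons x xs ih =>
    simp only [List.foldl_cons, List.mem_cons]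
    rcases ih (max m x) with h | h
    · rcases max_choice m x with h' | h'
      · exact Or.inl (h.trans h')
      · exact Or.inr (Or.inl (h.trans h'))
    · exact Or.inr (Or.inr h)

-- membership in take as getD
lemma mem_take_iff (w : List ℕ) (i : ℕ) (hi : i ≤ w.length) (x : ℕ) :
    x ∈ w.take i ↔ ∃ k < i, w.getD k 0 = x := by
  constructor
  · intro hx
    obtain ⟨k, hk, hx⟩ := List.getElem_of_mem hx
    have hk' : k < i := by simpa using lt_of_lt_of_le hk (by simp)
    have hkl : k < w.length := by simp at hk; omega
    refine ⟨k, hk', ?_⟩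
    rw [List.getD_eq_getElem _ _ hkl, ← List.getElem_take (xs := w) (h := hk), hx]
  · rintro ⟨k, hk, rfl⟩
    have hkl : k < w.length := lt_of_lt_of_le hk hi
    have hk2 : k < (w.take i).length := by simp; omega
    rw [List.getD_eq_getElem _ _ hkl, ← List.getElem_take (xs := w) (h := hk2)]
    exact List.getElem_mem hk2


lemma lrmax_iff (w : List ℕ) (i : ℕ) (hi : i < w.length) (hpos : ∀ x ∈ w, 0 < x) :
    IsLRMax w i ↔ (w.take i).foldl max 0 < w.getD i 0 := by
  rw [foldl_max_lt]
  have hpa : 0 < w.getD i 0 := by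
    rw [List.getD_eq_getElem _ _ hi]
    exact hpos _ (List.getElem_mem hi)
  constructor
  · intro h
    refine ⟨hpa, fun x hx => ?_⟩
    obtain ⟨k, hk, rfl⟩ := (mem_take_iff w i (le_of_lt hi) x).1 hx
    exact h k hk
  · rintro ⟨-, h⟩ k hk
    exact h _ ((mem_take_iff w i (le_of_lt hi) _).2 ⟨k, hk, rfl⟩)

lemma exists_prefix_iff (w : List ℕ) (i b : ℕ) (hi : i ≤ w.length) :
    (∃ k ∈ Finset.range i, b < w.getD k 0) ↔ b < (w.take i).foldl max 0 := by
  rw [lt_foldl_max]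
  simp only [Nat.not_lt_zero, false_or, Finset.mem_range]
  constructor
  · rintro ⟨k, hk, h⟩
    exact ⟨_, (mem_take_iff w i hi _).2 ⟨k, hk, rfl⟩, h⟩
  · rintro ⟨x, hx, h⟩
    obtain ⟨k, hk, rfl⟩ := (mem_take_iff w i hi x).1 hx
    exact ⟨k, hk, h⟩

lemma mix_eq (w : List ℕ) (hpos : ∀ x ∈ w, 0 < x) : mix w = (gcode 0 w).sum := by
  rw [mix, Finset.card_filter, Finset.sum_product, gcode_sum]
  refine Finset.sum_congr rfl fun i hi => ?_
  rw [Finset.mem_range] at hi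
  by_cases hm : (w.take i).foldl max 0 < w.getD i 0
  · rw [if_pos hm]
    have hlr : IsLRMax w i := (lrmax_iff w i hi hpos).2 hm
    rw [← countP_drop_eq_sum' w i (fun y => y < w.getD i 0)]
    refine Finset.sum_congr rfl fun j _ => if_congr ?_ rfl rfl
    dsimp only
    constructor
    · rintro ⟨hij, (⟨h1, -⟩ | ⟨h1, h2⟩)⟩
      · exact ⟨hij, h1⟩
      · exfalso
        have := (exists_prefix_iff w i (w.getD j 0) (le_of_lt hi)).1 h2
        omega
    · rintro ⟨hij, h⟩
      exact ⟨hij, Or.inl ⟨h, hlr⟩⟩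
  · rw [if_neg hm]
    have hnlr : ¬ IsLRMax w i := fun h => hm ((lrmax_iff w i hi hpos).1 h)
    rw [← countP_drop_eq_sum' w i (fun y => w.getD i 0 < y ∧ y < (w.take i).foldl max 0)]
    refine Finset.sum_congr rfl fun j _ => if_congr ?_ rfl rfl
    dsimp only
    constructor
    · rintro ⟨hij, (⟨-, h2⟩ | ⟨h1, h2⟩)⟩
      · exact absurd h2 hnlr
      · exact ⟨hij, h1, (exists_prefix_iff w i (w.getD j 0) (le_of_lt hi)).1 h2⟩
    · rintro ⟨hij, h1, h2⟩
      exact ⟨hij, Or.inr ⟨h1, (exists_prefix_iff w i (w.getD j 0) (le_of_lt hi)).2 h2⟩⟩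

lemma getD_ne (w : List ℕ) (hnd : w.Nodup) {k j : ℕ} (hk : k < w.length) (hj : j < w.length)
    (hkj : k ≠ j) : w.getD k 0 ≠ w.getD j 0 := by
  rw [List.getD_eq_getElem _ _ hk, List.getD_eq_getElem _ _ hj]
  intro h
  exact hkj ((hnd.getElem_inj_iff).1 h)

lemma take_succ_foldl (w : List ℕ) (m0 i : ℕ) (h : i < w.length) :
    (w.take (i + 1)).foldl max m0 = max ((w.take i).foldl max m0) (w.getD i 0) := by
  rw [List.take_succ, List.getElem?_eq_getElem h, List.getD_eq_getElem _ _ h]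
  simp only [Option.toList_some, List.foldl_append, List.foldl_cons, List.foldl_nil]

lemma das_eq (w : List ℕ) (hnd : w.Nodup) (hpos : ∀ x ∈ w, 0 < x) :
    das w = des (gcode 0 w) := by
  unfold das des
  have hl : (gcode 0 w).length = w.length := by
    suffices h : ∀ m (v : List ℕ), (gcode m v).length = v.length from h 0 w
    intro m v
    induction v generalizing m with
    | nil => rfl
    | cons x xs ih => simp [gcode, ih]
  rw [hl]
  congr 1
  refine Finset.filter_congr fun i hi => ?_
  rw [Finset.mem_range] at hi
  have h1 : i + 1 < w.length := by omega
  have h0 : i < w.length := by omega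
  set a := w.getD i 0 with ha
  set b := w.getD (i + 1) 0 with hb
  set m := (w.take i).foldl max 0 with hm
  have hpa : 0 < a := by rw [ha, List.getD_eq_getElem _ _ h0]; exact hpos _ (List.getElem_mem h0)
  have hpb : 0 < b := by rw [hb, List.getD_eq_getElem _ _ h1]; exact hpos _ (List.getElem_mem h1)
  have hmax : (w.take (i + 1)).foldl max 0 = max m a := take_succ_foldl w 0 i h0
  have hdrop : w.drop (i + 1) = b :: w.drop (i + 2) := by
    rw [List.drop_eq_getElem_cons h1, hb, List.getD_eq_getElem _ _ h1]
  set S := w.drop (i + 2) with hS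
  have hlr : IsLRMax w i ↔ m < a := lrmax_iff w i h0 hpos
  have hex : (∃ k ∈ Finset.range i, b < w.getD k 0) ↔ b < m :=
    exists_prefix_iff w i b (le_of_lt h0)
  have hab : a ≠ b := getD_ne w hnd h0 h1 (by omega)
  have hma : m ≠ a ∧ m ≠ b := by
    rcases foldl_max_mem (w.take i) 0 with h | h
    · have h0m : m = 0 := by rw [hm]; exact h
      omega
    · obtain ⟨k, hk, hkm⟩ := (mem_take_iff w i (le_of_lt h0) m).1 h
      constructor
      · rw [← hkm]; exact getD_ne w hnd (by omega) h0 (by omega)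
      · rw [← hkm]; exact getD_ne w hnd (by omega) h1 (by omega)
  rw [gcode_getD 0 w i h0, gcode_getD 0 w (i + 1) h1, hmax, hdrop, List.countP_cons,
    List.countP_cons, ← ha, ← hb, ← hm, ← hS]
  rw [hlr, hex]
  simp only [decide_eq_true_eq]
  rcases Nat.lt_or_ge m a with hlt | hge
  · -- m < a, so max m a = a
    have hmaxa : max m a = a := max_eq_right (le_of_lt hlt)
    rw [hmaxa, if_pos hlt]
    rcases Nat.lt_or_ge b a with hba | hba'
    · -- b < a : descent at LR max, das active; code descent
      have hnab : ¬ a < b := by omega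
      rw [if_neg hnab, if_pos hba]
      have hmono : S.countP (fun y => decide (b < y ∧ y < a)) ≤
          S.countP (fun y => decide (y < a)) :=
        List.countP_mono_left fun x _ hx => by
          simp only [decide_eq_true_eq] at *; omega
      constructor
      · intro _; omega
      · intro _; exact Or.inl ⟨hba, hlt⟩
    · -- a < b
      have hab2 : a < b := by omega
      have hnba : ¬ b < a := by omega
      rw [if_pos hab2, if_neg hnba]
      have hmono : S.countP (fun y => decide (y < a)) ≤
          S.countP (fun y => decide (y < b)) :=
        List.countP_mono_left fun x _ hx => by
          simp only [decide_eq_true_eq] at *; omega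
      constructor
      · rintro (⟨h1', -⟩ | ⟨-, h2'⟩) <;> omega
      · intro hcon; omega
  · -- a < m
    have ham : a < m := by rcases hma with ⟨h', -⟩; omega
    have hmaxm : max m a = m := max_eq_left (le_of_lt ham)
    have hnm : ¬ m < a := by omega
    rw [hmaxm, if_neg hnm]
    rcases Nat.lt_or_ge b a with hba | hba'
    · -- b < a : das inactive, no code descent
      have hnb : ¬ m < b := by omega
      have hno : ¬ (a < b ∧ b < m) := by omega
      rw [if_neg hnb, if_neg hno]
      have hmono : S.countP (fun y => decide (a < y ∧ y < m)) ≤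
          S.countP (fun y => decide (b < y ∧ y < m)) :=
        List.countP_mono_left fun x _ hx => by
          simp only [decide_eq_true_eq] at *; omega
      constructor
      · rintro (⟨-, h2'⟩ | ⟨h1', -⟩) <;> omega
      · intro hcon; omega
    · have hab2 : a < b := by omega
      rcases Nat.lt_or_ge b m with hbm | hbm'
      · -- a < b < m : das active, code descent
        have hnb : ¬ m < b := by omega
        rw [if_neg hnb, if_pos (⟨hab2, hbm⟩ : a < b ∧ b < m)]
        have hmono : S.countP (fun y => decide (b < y ∧ y < m)) ≤
            S.countP (fun y => decide (a < y ∧ y < m)) :=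
          List.countP_mono_left fun x _ hx => by
            simp only [decide_eq_true_eq] at *; omega
        constructor
        · intro _; omega
        · intro _; exact Or.inr ⟨hab2, hbm⟩
      · -- m < b : new LR max, das inactive
        have hmb : m < b := by rcases hma with ⟨-, h'⟩; omega
        have hno : ¬ (a < b ∧ b < m) := by omega
        rw [if_pos hmb, if_neg hno]
        have hmono : S.countP (fun y => decide (a < y ∧ y < m)) ≤
            S.countP (fun y => decide (y < b)) :=
          List.countP_mono_left fun x _ hx => by
            simp only [decide_eq_true_eq] at *; omega
        constructor
        · rintro (⟨h1', -⟩ | ⟨-, h2'⟩) <;> omega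
        · intro hcon; omega

lemma countP_toFinset (l : List ℕ) (h : l.Nodup) (p : ℕ → Bool) :
    l.countP p = (l.toFinset.filter (fun x => p x = true)).card := by
  rw [List.countP_eq_length_filter, ← List.toFinset_card_of_nodup (h.filter p),
    List.toFinset_filter]

lemma filter_lt_card_strict {S : Finset ℕ} {u v : ℕ} (hu : u ∈ S) (huv : u < v) :
    (S.filter (· < u)).card < (S.filter (· < v)).card := by
  apply Finset.card_lt_card
  have hsub : S.filter (· < u) ⊆ S.filter (· < v) := by
    intro z hz
    simp only [Finset.mem_filter] at *
    exact ⟨hz.1, by omega⟩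
  refine (Finset.ssubset_iff_of_subset hsub).2 ⟨u, Finset.mem_filter.2 ⟨hu, huv⟩, fun hc => ?_⟩
  simp at hc

lemma filter_lt_card_inj {S : Finset ℕ} {x y : ℕ} (hx : x ∈ S) (hy : y ∈ S)
    (h : (S.filter (· < x)).card = (S.filter (· < y)).card) : x = y := by
  rcases lt_trichotomy x y with hlt | heq | hgt
  · exact absurd h (Nat.ne_of_lt (filter_lt_card_strict hx hlt))
  · exact heq
  · exact absurd h.symm (Nat.ne_of_lt (filter_lt_card_strict hy hgt))

lemma card_partition {S : Finset ℕ} {x m : ℕ} (hx : x ∈ S) (hxm : x < m) :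
    (S.filter (· < m)).card
      = (S.filter (· < x)).card + 1 + (S.filter (fun z => x < z ∧ z < m)).card := by
  classical
  have hsplit : S.filter (· < m)
      = (S.filter (· < x)) ∪ insert x (S.filter (fun z => x < z ∧ z < m)) := by
    ext z
    simp only [Finset.mem_filter, Finset.mem_union, Finset.mem_insert]
    constructor
    · rintro ⟨hz, hzm⟩
      rcases lt_trichotomy z x with h' | rfl | h'
      · exact Or.inl ⟨hz, h'⟩
      · exact Or.inr (Or.inl rfl)
      · exact Or.inr (Or.inr ⟨hz, h', hzm⟩)
    · rintro (⟨hz, h'⟩ | rfl | ⟨hz, -, h'⟩)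
      · exact ⟨hz, by omega⟩
      · exact ⟨hx, hxm⟩
      · exact ⟨hz, h'⟩
  rw [hsplit, Finset.card_union_of_disjoint, Finset.card_insert_of_notMem]
  · omega
  · simp only [Finset.mem_filter]
    rintro ⟨-, h', -⟩
    omega
  · rw [Finset.disjoint_left]
    rintro z hz1 hz2
    simp only [Finset.mem_filter, Finset.mem_insert] at hz1 hz2
    rcases hz2 with rfl | ⟨-, h', -⟩ <;> omega

lemma filter_lt_le_of_lt {S : Finset ℕ} {m x : ℕ} (hmx : m < x) :
    (S.filter (· < m)).card ≤ (S.filter (· < x)).card := by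
  apply Finset.card_le_card
  intro z hz
  simp only [Finset.mem_filter] at *
  exact ⟨hz.1, by omega⟩

lemma ghead_inj {S : Finset ℕ} {m x y : ℕ} (hm : m ∉ S) (hx : x ∈ S) (hy : y ∈ S)
    (h : (if m < x then (S.filter (· < x)).card
            else (S.filter (fun z => x < z ∧ z < m)).card)
       = (if m < y then (S.filter (· < y)).card
            else (S.filter (fun z => y < z ∧ z < m)).card)) :
    x = y := by
  have hxm : x ≠ m := fun hc => hm (hc ▸ hx)
  have hym : y ≠ m := fun hc => hm (hc ▸ hy)
  by_cases hmx : m < x <;> by_cases hmy : m < y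
  · rw [if_pos hmx, if_pos hmy] at h
    exact filter_lt_card_inj hx hy h
  · rw [if_pos hmx, if_neg hmy] at h
    have h1 : y < m := by omega
    have h2 := card_partition hy h1
    have h3 := filter_lt_le_of_lt (S := S) hmx
    omega
  · rw [if_neg hmx, if_pos hmy] at h
    have h1 : x < m := by omega
    have h2 := card_partition hx h1
    have h3 := filter_lt_le_of_lt (S := S) hmy
    omega
  · rw [if_neg hmx, if_neg hmy] at h
    have h1 : x < m := by omega
    have h2 : y < m := by omega
    have h3 := card_partition hx h1
    have h4 := card_partition hy h2
    rcases lt_trichotomy x y with hlt | heq | hgt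
    · have := filter_lt_card_strict hx hlt; omega
    · exact heq
    · have := filter_lt_card_strict hy hgt; omega

lemma head_countP_lt (x : ℕ) (v' : List ℕ) (hnd : (x :: v').Nodup) :
    v'.countP (fun y => decide (y < x))
      = ((x :: v').toFinset.filter (· < x)).card := by
  have hx : x ∉ v'.toFinset := by
    simp only [List.mem_toFinset]
    exact (List.nodup_cons.1 hnd).1
  rw [countP_toFinset v' (List.nodup_cons.1 hnd).2]
  have h1 : v'.toFinset = (x :: v').toFinset.erase x := by
    rw [List.toFinset_cons, Finset.erase_insert hx]
  rw [h1, Finset.filter_erase, Finset.erase_eq_of_notMem]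
  · simp only [decide_eq_true_eq]
  · intro hmem
    simp only [Finset.mem_filter, decide_eq_true_eq] at hmem
    omega

lemma head_countP_between (x m : ℕ) (v' : List ℕ) (hnd : (x :: v').Nodup) :
    v'.countP (fun y => decide (x < y ∧ y < m))
      = ((x :: v').toFinset.filter (fun z => x < z ∧ z < m)).card := by
  have hx : x ∉ v'.toFinset := by
    simp only [List.mem_toFinset]
    exact (List.nodup_cons.1 hnd).1
  rw [countP_toFinset v' (List.nodup_cons.1 hnd).2]
  have h1 : v'.toFinset = (x :: v').toFinset.erase x := by
    rw [List.toFinset_cons, Finset.erase_insert hx]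
  rw [h1, Finset.filter_erase, Finset.erase_eq_of_notMem]
  · simp only [decide_eq_true_eq]
  · intro hmem
    simp only [Finset.mem_filter, decide_eq_true_eq] at hmem
    omega

lemma codeI_inj : ∀ {v w : List ℕ}, v.Nodup → w.Nodup → v.toFinset = w.toFinset →
    codeI v = codeI w → v = w
  | [], w, _, _, hset, _ => by
    have : w = [] := by simpa using hset.symm
    rw [this]
  | x :: v', [], _, _, hset, _ => by
    exfalso
    have : x ∈ ([] : List ℕ).toFinset := hset ▸ (by simp)
    simp at this
  | x :: v', y :: w', hv, hw, hset, hcode => by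
    have hxS : x ∈ (x :: v').toFinset := by simp
    have hyS : y ∈ (x :: v').toFinset := hset ▸ (by simp)
    have hd : v'.countP (fun z => decide (z < x)) = w'.countP (fun z => decide (z < y)) :=
      (List.cons_eq_cons.1 hcode).1
    rw [head_countP_lt x v' hv, head_countP_lt y w' hw, ← hset] at hd
    have hxy : x = y := filter_lt_card_inj hxS hyS hd
    subst hxy
    have htails : v'.toFinset = w'.toFinset := by
      have hxv : x ∉ v'.toFinset := by simp only [List.mem_toFinset]; exact (List.nodup_cons.1 hv).1
      have hxw : x ∉ w'.toFinset := by simp only [List.mem_toFinset]; exact (List.nodup_cons.1 hw).1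
      have := congrArg (fun s => Finset.erase s x) hset
      simpa [List.toFinset_cons, Finset.erase_insert hxv, Finset.erase_insert hxw] using this
    rw [codeI_inj (List.nodup_cons.1 hv).2 (List.nodup_cons.1 hw).2 htails
      (List.cons_eq_cons.1 hcode).2]

lemma gcode_inj : ∀ {v : List ℕ} (m : ℕ) {w : List ℕ}, v.Nodup → w.Nodup →
    v.toFinset = w.toFinset → m ∉ v.toFinset → gcode m v = gcode m w → v = w
  | [], m, w, _, _, hset, _, _ => by
    have : w = [] := by simpa using hset.symm
    rw [this]
  | x :: v', m, [], _, _, hset, _, _ => by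
    exfalso
    have : x ∈ ([] : List ℕ).toFinset := hset ▸ (by simp)
    simp at this
  | x :: v', m, y :: w', hv, hw, hset, hm, hcode => by
    have hxS : x ∈ (x :: v').toFinset := by simp
    have hyS : y ∈ (x :: v').toFinset := hset ▸ (by simp)
    have hd := (List.cons_eq_cons.1 hcode).1
    have hdx : (if m < x then v'.countP (fun z => decide (z < x))
        else v'.countP (fun z => decide (x < z ∧ z < m)))
        = (if m < x then ((x :: v').toFinset.filter (· < x)).card
        else ((x :: v').toFinset.filter (fun z => x < z ∧ z < m)).card) := by
      by_cases h : m < x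
      · rw [if_pos h, if_pos h, head_countP_lt x v' hv]
      · rw [if_neg h, if_neg h, head_countP_between x m v' hv]
    have hdy : (if m < y then w'.countP (fun z => decide (z < y))
        else w'.countP (fun z => decide (y < z ∧ z < m)))
        = (if m < y then ((x :: v').toFinset.filter (· < y)).card
        else ((x :: v').toFinset.filter (fun z => y < z ∧ z < m)).card) := by
      rw [hset]
      by_cases h : m < y
      · rw [if_pos h, if_pos h, head_countP_lt y w' hw]
      · rw [if_neg h, if_neg h, head_countP_between y m w' hw]
    rw [hdx] at hd
    rw [hdy] at hd
    have hxy : x = y := ghead_inj hm hxS hyS hd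
    subst hxy
    have htails : v'.toFinset = w'.toFinset := by
      have hxv : x ∉ v'.toFinset := by simp only [List.mem_toFinset]; exact (List.nodup_cons.1 hv).1
      have hxw : x ∉ w'.toFinset := by simp only [List.mem_toFinset]; exact (List.nodup_cons.1 hw).1
      have := congrArg (fun s => Finset.erase s x) hset
      simpa [List.toFinset_cons, Finset.erase_insert hxv, Finset.erase_insert hxw] using this
    have hm' : max m x ∉ v'.toFinset := by
      have hxv : x ∉ v'.toFinset := by simp only [List.mem_toFinset]; exact (List.nodup_cons.1 hv).1
      have hmv : m ∉ v'.toFinset := fun hc => hm (by simp [List.toFinset_cons, hc])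
      rcases max_choice m x with h' | h' <;> rw [h'] <;> assumption
    rw [gcode_inj (max m x) (List.nodup_cons.1 hv).2 (List.nodup_cons.1 hw).2 htails hm'
      (List.cons_eq_cons.1 hcode).2]

def codes : ℕ → Finset (List ℕ)
  | 0 => {[]}
  | n + 1 => ((Finset.range (n + 1)) ×ˢ codes n).image fun p => p.1 :: p.2

lemma cons_injective2 : Function.Injective (fun p : ℕ × List ℕ => p.1 :: p.2) := by
  rintro ⟨a, l⟩ ⟨b, m⟩ h
  simp only [List.cons_eq_cons] at h
  simp [Prod.ext_iff, h.1, h.2]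

lemma mem_codes_cons {n x : ℕ} {xs : List ℕ} :
    x :: xs ∈ codes (n + 1) ↔ x ≤ n ∧ xs ∈ codes n := by
  simp only [codes, Finset.mem_image, Finset.mem_product, Finset.mem_range]
  constructor
  · rintro ⟨⟨u, l⟩, ⟨h1, h2⟩, h⟩
    simp only [List.cons_eq_cons] at h
    rw [← h.1, ← h.2]
    exact ⟨by omega, h2⟩
  · rintro ⟨h1, h2⟩
    exact ⟨(x, xs), ⟨by omega, h2⟩, rfl⟩

lemma codes_card (n : ℕ) : (codes n).card = n.factorial := by
  induction n with
  | zero => rfl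
  | succ n ih =>
    rw [codes, Finset.card_image_of_injective _ cons_injective2, Finset.card_product,
      Finset.card_range, ih, Nat.factorial_succ]

lemma codeI_mem_codes (w : List ℕ) : codeI w ∈ codes w.length := by
  induction w with
  | nil => simp [codes, codeI]
  | cons x xs ih =>
    rw [codeI, List.length_cons, mem_codes_cons]
    exact ⟨List.countP_le_length, ih⟩

lemma gcode_mem_codes (m : ℕ) (w : List ℕ) : gcode m w ∈ codes w.length := by
  induction w generalizing m with
  | nil => simp [codes, gcode]
  | cons x xs ih =>
    rw [gcode, List.length_cons, mem_codes_cons]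
    refine ⟨?_, ih (max m x)⟩
    split <;> exact List.countP_le_length

lemma permList_length {n : ℕ} (π : Equiv.Perm (Fin n)) : (permList π).length = n :=
  List.length_ofFn

lemma permList_nodup {n : ℕ} (π : Equiv.Perm (Fin n)) : (permList π).Nodup := by
  rw [permList, List.nodup_ofFn]
  intro i j h
  exact π.injective (Fin.val_injective (Nat.succ_injective h))

lemma permList_pos {n : ℕ} (π : Equiv.Perm (Fin n)) : ∀ x ∈ permList π, 0 < x := by
  intro x hx
  rw [permList, List.mem_ofFn] at hx
  obtain ⟨i, rfl⟩ := hx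
  exact Nat.succ_pos _

lemma permList_toFinset {n : ℕ} (π : Equiv.Perm (Fin n)) :
    (permList π).toFinset = Finset.image (fun i : Fin n => (i : ℕ) + 1) Finset.univ := by
  ext x
  simp only [List.mem_toFinset, permList, List.mem_ofFn, Set.mem_range, Finset.mem_image,
    Finset.mem_univ, true_and]
  constructor
  · rintro ⟨i, rfl⟩
    exact ⟨π i, rfl⟩
  · rintro ⟨i, rfl⟩
    exact ⟨π.symm i, by simp⟩

lemma permList_injective {n : ℕ} : Function.Injective (permList (n := n)) := by
  intro π σ h
  rw [permList, permList, List.ofFn_inj] at h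
  ext i
  have := congrFun h i
  simpa using this

lemma count_by_code {n : ℕ} (F : Equiv.Perm (Fin n) → List ℕ)
    (hinj : Function.Injective F) (hmem : ∀ π, F π ∈ codes n)
    (P : List ℕ → Prop) [DecidablePred P] :
    (Finset.univ.filter fun π => P (F π)).card = ((codes n).filter P).card := by
  classical
  have himg : Finset.univ.image F = codes n := by
    apply Finset.eq_of_subset_of_card_le
    · intro l hl
      obtain ⟨π, -, rfl⟩ := Finset.mem_image.1 hl
      exact hmem π
    · rw [Finset.card_image_of_injective _ hinj, Finset.card_univ, Fintype.card_perm,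
        Fintype.card_fin, codes_card]
  rw [← himg, Finset.filter_image, Finset.card_image_of_injective _ hinj]


/-- `(das, mix)` is equidistributed with `(des, inv)` on `S_n`. -/
theorem das_mix_equidistributed_des_inv (n a b : ℕ) :
    Nat.card {π : Equiv.Perm (Fin n) // das (permList π) = a ∧ mix (permList π) = b} =
    Nat.card {π : Equiv.Perm (Fin n) // des (permList π) = a ∧ inv (permList π) = b} := by
  classical
  rw [Nat.card_eq_fintype_card, Nat.card_eq_fintype_card, Fintype.card_subtype,
    Fintype.card_subtype]
  have hG : ∀ π : Equiv.Perm (Fin n),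
      (das (permList π) = a ∧ mix (permList π) = b) ↔
      (des (gcode 0 (permList π)) = a ∧ (gcode 0 (permList π)).sum = b) := by
    intro π
    rw [← das_eq _ (permList_nodup π) (permList_pos π), ← mix_eq _ (permList_pos π)]
  have hF : ∀ π : Equiv.Perm (Fin n),
      (des (permList π) = a ∧ inv (permList π) = b) ↔
      (des (codeI (permList π)) = a ∧ (codeI (permList π)).sum = b) := by
    intro π
    rw [← des_eq (permList π), ← inv_eq (permList π)]
  rw [Finset.filter_congr fun π _ => hG π, Finset.filter_congr fun π _ => hF π]
  have hGinj : Function.Injective fun π : Equiv.Perm (Fin n) => gcode 0 (permList π) := by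
    intro π σ h
    apply permList_injective
    apply gcode_inj 0 (permList_nodup π) (permList_nodup σ)
      ((permList_toFinset π).trans (permList_toFinset σ).symm) ?_ h
    rw [permList_toFinset]
    simp only [Finset.mem_image, Finset.mem_univ, true_and]
    rintro ⟨i, hi⟩
    omega
  have hFinj : Function.Injective fun π : Equiv.Perm (Fin n) => codeI (permList π) := by
    intro π σ h
    apply permList_injective
    exact codeI_inj (permList_nodup π) (permList_nodup σ)
      ((permList_toFinset π).trans (permList_toFinset σ).symm) h
  have hGmem : ∀ π : Equiv.Perm (Fin n), gcode 0 (permList π) ∈ codes n := by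
    intro π
    have := gcode_mem_codes 0 (permList π)
    rwa [permList_length] at this
  have hFmem : ∀ π : Equiv.Perm (Fin n), codeI (permList π) ∈ codes n := by
    intro π
    have := codeI_mem_codes (permList π)
    rwa [permList_length] at this
  rw [count_by_code _ hGinj hGmem (fun l => des l = a ∧ l.sum = b),
    count_by_code _ hFinj hFmem (fun l => des l = a ∧ l.sum = b)]


end PaperStats
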